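/- arXiv:2206.08629 — 3 statements merged into one kernel-verified Lean document; each statement's English description precedes it below -/
import Mathlib

section
/- Lemma 1 (exact potential, Lemma 1 of the paper): For every agent i ∈ I, every joint strategy x = (x_j)_{j∈I}, and every alternative strategy x̃_i ∈ ℝ^{n_i}, it holds that J_i(x with i-th component replaced by x̃_i) − J_i(x) = P(x with i-th component replaced by x̃_i) − P(x); that is, P is an exact potential function for the family of cost functions (J_i)_{i∈I}. -/
open scoped RealInnerProductSpace BigOperators

/-- Lemma 1 (exact potential): with costs
`J i x = f i (x i) + ⟪Ξ i (x i), Q (σ x)⟫` where `σ x = ∑ j, Ξ j (x j)` and `Q` symmetric,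
the function `P x = ∑ i, f i (x i) + (1/2)⟪σ x, Q (σ x)⟫ + (1/2)∑ i, ⟪Ξ i (x i), Q (Ξ i (x i))⟫`
is an exact potential: unilateral deviations change `J i` and `P` by the same amount. -/
theorem exact_potential
    {ι : Type*} [Fintype ι] [DecidableEq ι] {H : ℕ} {n : ι → ℕ}
    (Q : EuclideanSpace ℝ (Fin H) →ₗ[ℝ] EuclideanSpace ℝ (Fin H))
    (hQsym : ∀ u v : EuclideanSpace ℝ (Fin H), ⟪Q u, v⟫ = ⟪u, Q v⟫)
    (Ξ : ∀ i : ι, EuclideanSpace ℝ (Fin (n i)) →ₗ[ℝ] EuclideanSpace ℝ (Fin H))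
    (f : ∀ i : ι, EuclideanSpace ℝ (Fin (n i)) → ℝ)
    (σ : (∀ i : ι, EuclideanSpace ℝ (Fin (n i))) → EuclideanSpace ℝ (Fin H))
    (hσ : ∀ x, σ x = ∑ j : ι, Ξ j (x j))
    (J : ι → (∀ i : ι, EuclideanSpace ℝ (Fin (n i))) → ℝ)
    (hJ : ∀ i x, J i x = f i (x i) + ⟪Ξ i (x i), Q (σ x)⟫)
    (P : (∀ i : ι, EuclideanSpace ℝ (Fin (n i))) → ℝ)
    (hP : ∀ x, P x = (∑ i : ι, f i (x i)) + (1 / 2) * ⟪σ x, Q (σ x)⟫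
        + (1 / 2) * ∑ i : ι, ⟪Ξ i (x i), Q (Ξ i (x i))⟫) :
    ∀ (i : ι) (x : ∀ i : ι, EuclideanSpace ℝ (Fin (n i)))
      (xt : EuclideanSpace ℝ (Fin (n i))),
      J i (Function.update x i xt) - J i x
        = P (Function.update x i xt) - P x := by
  intro i x xt
  set y := Function.update x i xt with hy
  -- generic update-sum lemma
  have hupd : ∀ (g : ∀ j : ι, EuclideanSpace ℝ (Fin (n j)) → ℝ),
      (∑ j : ι, g j (y j)) = (∑ j : ι, g j (x j)) - g i (x i) + g i xt := by
    intro g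
    have h1 : (fun j => g j (y j)) = Function.update (fun j => g j (x j)) i (g i xt) := by
      funext j
      by_cases hj : j = i
      · subst hj; simp [hy]
      · simp [hy, Function.update_of_ne hj]
    rw [h1, Finset.sum_update_of_mem (Finset.mem_univ i),
        ← Finset.sum_erase_add Finset.univ _ (Finset.mem_univ i)]
    simp [Finset.sum_erase_eq_sub (Finset.mem_univ i)]
    ring
  have hupdV : (∑ j : ι, Ξ j (y j)) = (∑ j : ι, Ξ j (x j)) - Ξ i (x i) + Ξ i xt := by
    have h1 : (fun j => Ξ j (y j)) = Function.update (fun j => Ξ j (x j)) i (Ξ i xt) := by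
      funext j
      by_cases hj : j = i
      · subst hj; simp [hy]
      · simp [hy, Function.update_of_ne hj]
    rw [h1, Finset.sum_update_of_mem (Finset.mem_univ i),
        ← Finset.sum_erase_add Finset.univ _ (Finset.mem_univ i)]
    simp only [Finset.sdiff_singleton_eq_erase]
    abel
  have hσy : σ y = σ x - Ξ i (x i) + Ξ i xt := by rw [hσ, hσ, hupdV]
  set a := Ξ i (x i)
  set b := Ξ i xt
  set s := σ x
  have hcomm : ∀ u v : EuclideanSpace ℝ (Fin H), ⟪u, Q v⟫ = ⟪v, Q u⟫ := by
    intro u v; rw [← hQsym, real_inner_comm]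
  have hf := hupd f
  have hg := hupd (fun j v => ⟪Ξ j v, Q (Ξ j v)⟫)
  rw [hJ, hJ, hP, hP, hσy, hf, hg]
  simp only [hy, Function.update_self]
  simp only [inner_sub_left, inner_add_left, inner_sub_right, inner_add_right,
    map_add, map_sub]
  rw [hcomm s a, hcomm s b, hcomm a b]
  ring
end

section
/- Lemma 2(i) (monotone pseudogradient): Suppose each f_i is differentiable and convex and Q is symmetric positive semidefinite. Define the pseudogradient map F by F(x) = (∇f_i(x_i) + Ξ_i^⊤ Q σ(x) + Ξ_i^⊤ Q Ξ_i x_i)_{i∈I}, where Ξ_i^⊤ denotes the adjoint of Ξ_i. Then F is a monotone operator on the product space: for all joint strategies x, y, Σ_{i∈I} ⟨F_i(x) − F_i(y), x_i − y_i⟩ ≥ 0. -/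
open scoped RealInnerProductSpace BigOperators

/-- Gradient of a convex differentiable function is monotone. -/
lemma grad_monotone_aux {E : Type*} [NormedAddCommGroup E] [InnerProductSpace ℝ E]
    [CompleteSpace E] (f : E → ℝ) (g : E → E)
    (hd : ∀ x, HasGradientAt f (g x) x) (hc : ConvexOn ℝ Set.univ f) (x y : E) :
    0 ≤ ⟪g x - g y, x - y⟫ := by
  set v : E := y - x with hv
  set φ : ℝ → ℝ := fun t => f (x + t • v) with hφ
  have hder : ∀ t : ℝ, HasDerivAt φ ⟪g (x + t • v), v⟫ t := by
    intro t
    have hline : HasDerivAt (fun t : ℝ => x + t • v) v t := by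
      simpa using ((hasDerivAt_id t).smul_const v).const_add x
    have := ((hd (x + t • v)).hasFDerivAt).comp_hasDerivAt t hline
    simp at this; exact this
  have hconvφ : ConvexOn ℝ Set.univ φ := by
    have := hc.comp_affineMap
      ((AffineMap.lineMap x y : ℝ →ᵃ[ℝ] E))
    have heq : φ = f ∘ (AffineMap.lineMap x y : ℝ →ᵃ[ℝ] E) := by
      funext t
      simp [hφ, AffineMap.lineMap_apply, hv, add_comm]
    rw [heq]
    simpa using this
  have hmono := hconvφ.monotoneOn_deriv
    (fun t _ => (hder t).differentiableAt) (Set.mem_univ (0:ℝ)) (Set.mem_univ (1:ℝ))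
    (by norm_num)
  rw [(hder 0).deriv, (hder 1).deriv] at hmono
  simp only [zero_smul, add_zero, one_smul] at hmono
  have hxy : x + v = y := by simp [hv]
  rw [hxy] at hmono
  have : ⟪g x - g y, x - y⟫ = ⟪g y, v⟫ - ⟪g x, v⟫ := by
    rw [hv]
    rw [inner_sub_left, inner_sub_right, inner_sub_right,
      inner_sub_right, inner_sub_right]
    ring
  rw [this]
  linarith

/-- Lemma 2(i) (monotone pseudogradient): if each `f i` is differentiable and convex
and `Q` is symmetric positive semidefinite, then the pseudogradient map
`F x = (∇f i (x i) + Ξᵢ* Q (σ x) + Ξᵢ* Q Ξᵢ (x i))_{i}` is monotone: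
`∑ i, ⟪F x i - F y i, x i - y i⟫ ≥ 0` for all joint strategies `x, y`. -/
theorem pseudogradient_monotone
    {ι : Type*} [Fintype ι] {H : ℕ} {n : ι → ℕ}
    (Q : EuclideanSpace ℝ (Fin H) →L[ℝ] EuclideanSpace ℝ (Fin H))
    (hQsym : ∀ u v : EuclideanSpace ℝ (Fin H), ⟪Q u, v⟫ = ⟪u, Q v⟫)
    (hQpsd : ∀ u : EuclideanSpace ℝ (Fin H), 0 ≤ ⟪u, Q u⟫)
    (Ξ : ∀ i : ι, EuclideanSpace ℝ (Fin (n i)) →L[ℝ] EuclideanSpace ℝ (Fin H))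
    (f : ∀ i : ι, EuclideanSpace ℝ (Fin (n i)) → ℝ)
    (f' : ∀ i : ι, EuclideanSpace ℝ (Fin (n i)) → EuclideanSpace ℝ (Fin (n i)))
    (hdiff : ∀ (i : ι) (xi : EuclideanSpace ℝ (Fin (n i))), HasGradientAt (f i) (f' i xi) xi)
    (hconv : ∀ i : ι, ConvexOn ℝ Set.univ (f i))
    (σ : (∀ i : ι, EuclideanSpace ℝ (Fin (n i))) → EuclideanSpace ℝ (Fin H))
    (hσ : ∀ x, σ x = ∑ j : ι, Ξ j (x j))
    (F : (∀ i : ι, EuclideanSpace ℝ (Fin (n i))) → ∀ i : ι, EuclideanSpace ℝ (Fin (n i)))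
    (hF : ∀ x i, F x i
        = f' i (x i) + (Ξ i).adjoint (Q (σ x)) + (Ξ i).adjoint (Q (Ξ i (x i)))) :
    ∀ x y : ∀ i : ι, EuclideanSpace ℝ (Fin (n i)),
      0 ≤ ∑ i : ι, ⟪F x i - F y i, x i - y i⟫ := by
  intro x y
  set s : EuclideanSpace ℝ (Fin H) := σ x - σ y with hs
  have key : ∀ i : ι, ⟪F x i - F y i, x i - y i⟫
      = ⟪f' i (x i) - f' i (y i), x i - y i⟫
        + ⟪Q s, Ξ i (x i - y i)⟫
        + ⟪Q (Ξ i (x i - y i)), Ξ i (x i - y i)⟫ := by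
    intro i
    have h1 : F x i - F y i
        = (f' i (x i) - f' i (y i)) + (Ξ i).adjoint (Q s)
          + (Ξ i).adjoint (Q (Ξ i (x i - y i))) := by
      rw [hF, hF, hs]
      simp only [map_sub]
      abel
    rw [h1, inner_add_left, inner_add_left,
      ContinuousLinearMap.adjoint_inner_left, ContinuousLinearMap.adjoint_inner_left]
  rw [Finset.sum_congr rfl (fun i _ => key i)]
  rw [Finset.sum_add_distrib, Finset.sum_add_distrib]
  have h2 : ∑ i : ι, ⟪Q s, Ξ i (x i - y i)⟫ = ⟪Q s, s⟫ := by
    rw [← inner_sum]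
    congr 1
    rw [hs, hσ, hσ, ← Finset.sum_sub_distrib]
    exact Finset.sum_congr rfl (fun i _ => map_sub (Ξ i) (x i) (y i))
  rw [h2]
  have t1 : 0 ≤ ∑ i : ι, ⟪f' i (x i) - f' i (y i), x i - y i⟫ :=
    Finset.sum_nonneg fun i _ =>
      grad_monotone_aux (f i) (f' i) (fun z => hdiff i z) (hconv i) (x i) (y i)
  have t2 : 0 ≤ ⟪Q s, s⟫ := by rw [hQsym]; exact hQpsd s
  have t3 : 0 ≤ ∑ i : ι, ⟪Q (Ξ i (x i - y i)), Ξ i (x i - y i)⟫ :=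
    Finset.sum_nonneg fun i _ => by rw [hQsym]; exact hQpsd _
  linarith
end

section
/- Proposition 2 (existence of box-feasible pressures on a tree): Let G be a finite simple graph on vertex set V that is a tree, with a fixed orientation, let θ : E(G) → ℝ, and let ψ⁰ : V → ℝ be a particular solution, i.e., ψ⁰(h(e)) − ψ⁰(t(e)) = θ(e) for every edge e. Let lower and upper bounds lb, ub : V → ℝ be given. Then there exists ψ : V → ℝ with lb(v) ≤ ψ(v) ≤ ub(v) for all v ∈ V and ψ(h(e)) − ψ(t(e)) = θ(e) for all edges e, if and only if ψ⁰(j) − ψ⁰(k) ≤ ub(j) − lb(k) for all vertices j, k ∈ V. -/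
/-- Proposition 2 (existence of box-feasible pressures on a tree): let `G` be a finite
tree with a fixed orientation, `θ` edge data, and `ψ0` a particular solution of the
edge-difference system. Given bounds `lb ≤ ub` per vertex, a solution `ψ` of the system
with `lb v ≤ ψ v ≤ ub v` for all `v` exists iff
`ψ0 j - ψ0 k ≤ ub j - lb k` for all vertices `j, k`. -/
theorem box_feasible_pressures_on_tree
    {V : Type*} [Fintype V] (G : SimpleGraph V) (hG : G.IsTree)
    (hd tl : G.edgeSet → V)
    (horient : ∀ e : G.edgeSet, (e : Sym2 V) = s(hd e, tl e))
    (θ : G.edgeSet → ℝ) (ψ0 : V → ℝ)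
    (hψ0 : ∀ e : G.edgeSet, ψ0 (hd e) - ψ0 (tl e) = θ e)
    (lb ub : V → ℝ) :
    (∃ ψ : V → ℝ, (∀ v : V, lb v ≤ ψ v ∧ ψ v ≤ ub v) ∧
        ∀ e : G.edgeSet, ψ (hd e) - ψ (tl e) = θ e)
      ↔ ∀ j k : V, ψ0 j - ψ0 k ≤ ub j - lb k := by
  constructor
  · rintro ⟨ψ, hbox, hsol⟩ j k
    -- ψ - ψ0 is constant on the connected graph
    have hadj : ∀ u v : V, G.Adj u v → ψ u - ψ0 u = ψ v - ψ0 v := by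
      intro u v h
      have hmem : s(u, v) ∈ G.edgeSet := h
      set e : G.edgeSet := ⟨s(u, v), hmem⟩ with he
      have horiente := horient e
      have h1 : ψ (hd e) - ψ0 (hd e) = ψ (tl e) - ψ0 (tl e) := by
        have := hψ0 e; have := hsol e; linarith
      have : s(u, v) = s(hd e, tl e) := horiente
      rw [Sym2.eq_iff] at this
      rcases this with ⟨hu, hv⟩ | ⟨hu, hv⟩
      · rw [← hu, ← hv] at h1; linarith
      · rw [← hu, ← hv] at h1; linarith
    have hconst : ∀ u v : V, ψ u - ψ0 u = ψ v - ψ0 v := by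
      intro u v
      have hr : G.Reachable u v := hG.isConnected u v
      obtain ⟨w⟩ := hr
      induction w with
      | nil => rfl
      | cons h p ih => exact (hadj _ _ h).trans ih
    have h1 := (hbox j).2
    have h2 := (hbox k).1
    have := hconst j k
    linarith
  · intro h
    rcases isEmpty_or_nonempty V with hV | hV
    · exact ⟨ψ0, fun v => (IsEmpty.elim hV v), hψ0⟩
    · set c := Finset.univ.sup' (Finset.univ_nonempty) (fun v => lb v - ψ0 v) with hc
      refine ⟨fun v => ψ0 v + c, fun v => ⟨?_, ?_⟩, ?_⟩
      · have : lb v - ψ0 v ≤ c :=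
          Finset.le_sup' (fun v => lb v - ψ0 v) (Finset.mem_univ v)
        show lb v ≤ ψ0 v + c
        linarith
      · have : c ≤ ub v - ψ0 v := by
          apply Finset.sup'_le
          intro k _
          have := h v k; linarith
        show ψ0 v + c ≤ ub v
        linarith
      · intro e
        show ψ0 (hd e) + c - (ψ0 (tl e) + c) = θ e
        have := hψ0 e; linarith
end
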